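/- For all integers d ≥ 3 and c with gcd(d-1, c) = 1, the quotient additive group (ℤ × ℤ) / range(f_{d,c}) is not isomorphic to the quotient additive group (ℤ × ℤ) / range(f_{d,0}). -/

import Mathlib

/-- The additive (ℤ-linear) map `f_{d,c} : ℤ × ℤ → ℤ × ℤ`,
`f_{d,c}(z, z') = ((1-d)·z, -c·z + (1-d)·z')`. -/
def fdc (d c : ℤ) : (ℤ × ℤ) →ₗ[ℤ] (ℤ × ℤ) where
  toFun p := ((1 - d) * p.1, -c * p.1 + (1 - d) * p.2)
  map_add' p q := by ext <;> simp <;> ring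
  map_smul' m p := by ext <;> simp <;> ring

/-- For all integers d ≥ 3 and c with gcd(d-1, c) = 1, the quotient additive group
(ℤ × ℤ) / range(f_{d,c}) is not isomorphic to (ℤ × ℤ) / range(f_{d,0}). -/
theorem stmt_5 (d c : ℤ) (hd : 3 ≤ d) (hgcd : Int.gcd (d - 1) c = 1) :
    ¬ Nonempty (((ℤ × ℤ) ⧸ LinearMap.range (fdc d c)) ≃+
      ((ℤ × ℤ) ⧸ LinearMap.range (fdc d 0))) := by
  rintro ⟨e⟩
  -- Every element of the second quotient is killed by (d-1).
  have hkill : ∀ y : (ℤ × ℤ) ⧸ LinearMap.range (fdc d 0), (d - 1) • y = 0 := by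
    intro y
    induction y using Submodule.Quotient.mk_surjective _ |>.forall.2 with
    | _ p =>
      rw [← Submodule.Quotient.mk_smul, Submodule.Quotient.mk_eq_zero]
      exact ⟨-p, by ext <;> simp [fdc] <;> ring⟩
  -- The class of (1,0) in the first quotient.
  set x : (ℤ × ℤ) ⧸ LinearMap.range (fdc d c) :=
    Submodule.Quotient.mk (1, 0) with hx
  have h0 : (d - 1) • x = 0 := by
    have := hkill (e x)
    rw [← map_zsmul e, ← map_zero e] at this
    exact e.injective this
  rw [hx, ← Submodule.Quotient.mk_smul, Submodule.Quotient.mk_eq_zero] at h0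
  obtain ⟨⟨z, z'⟩, hz⟩ := h0
  have h1 : (1 - d) * z = d - 1 := by simpa [fdc] using congrArg Prod.fst hz
  have h2 : -c * z + (1 - d) * z' = 0 := by simpa [fdc] using congrArg Prod.snd hz
  have hzval : z = -1 := by nlinarith [sq_nonneg (z + 1), sq_nonneg (z - 1)]
  subst hzval
  have hdvd : (d - 1) ∣ c := ⟨z', by linarith⟩
  have hdvd1 : (d - 1) ∣ (1 : ℤ) := by
    have := Int.dvd_coe_gcd (dvd_refl (d - 1)) hdvd
    rwa [hgcd, Nat.cast_one] at this
  have := Int.le_of_dvd one_pos hdvd1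
  linarith
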